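/- Let H_0 and H_1 be subsets of P(X) contained in a weakly compact set. If there exists an FP-test φ_n whose regions {φ_n=0} and {φ_n=1} have disjoint closures and which is uniformly consistent (sup_{P∈H_i} P^n(φ_n ≠ i) → 0 for i=0,1), then the weak closures of H_0 and H_1 in P(X) are disjoint. -/

import Mathlib

open MeasureTheory Filter Topology Metric Set
open scoped ENNReal NNReal

section Aux

/-- One step of tensorization of the Lévy–Prokhorov-type inequality. -/
lemma lp_step {X Y : Type*}
    [MetricSpace X] [SecondCountableTopology X] [MeasurableSpace X] [OpensMeasurableSpace X]
    [MetricSpace Y] [SecondCountableTopology Y] [MeasurableSpace Y] [OpensMeasurableSpace Y]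
    (P Q : Measure X) (R S : Measure Y)
    [IsProbabilityMeasure P] [IsProbabilityMeasure Q]
    [IsProbabilityMeasure R] [IsProbabilityMeasure S]
    {ε δ : ℝ} (hε : 0 < ε) (hδ : 0 < δ)
    (hPQ : ∀ B : Set X, MeasurableSet B → P B ≤ Q (thickening ε B) + ENNReal.ofReal ε)
    (hRS : ∀ C : Set Y, MeasurableSet C → R C ≤ S (thickening δ C) + ENNReal.ofReal δ)
    {G : Set (X × Y)} (hG : MeasurableSet G) :
    (P.prod R) G ≤ (Q.prod S) (thickening (ε + δ) G) + ENNReal.ofReal (ε + δ) := by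
  set g : X → ℝ≥0∞ := fun x => S (Prod.mk x ⁻¹' thickening δ G) with hg_def
  set g' : X → ℝ≥0∞ := fun x => S (Prod.mk x ⁻¹' thickening (ε + δ) G) with hg'_def
  have hmG : MeasurableSet (thickening δ G) := isOpen_thickening.measurableSet
  have hmG' : MeasurableSet (thickening (ε + δ) G) := isOpen_thickening.measurableSet
  have hgmble : Measurable g := measurable_measure_prodMk_left hmG
  have hg'mble : Measurable g' := measurable_measure_prodMk_left hmG'
  have hgle : ∀ x, g x ≤ 1 := fun x => prob_le_one
  have hg'le : ∀ x, g' x ≤ 1 := fun x => prob_le_one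
  have hgtop : ∀ x, g x ≠ ⊤ := fun x => ne_top_of_le_ne_top ENNReal.one_ne_top (hgle x)
  have hg'top : ∀ x, g' x ≠ ⊤ := fun x => ne_top_of_le_ne_top ENNReal.one_ne_top (hg'le x)
  -- key monotonicity through thickening
  have key : ∀ x x', dist x' x < ε → g x ≤ g' x' := by
    intro x x' hd
    apply measure_mono
    intro y hy
    simp only [mem_preimage, mem_thickening_iff] at hy ⊢
    obtain ⟨p, hp, hdp⟩ := hy
    refine ⟨p, hp, ?_⟩
    calc dist (x', y) p ≤ dist (x', y) (x, y) + dist (x, y) p := dist_triangle _ _ _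
      _ < ε + δ := by
          apply add_lt_add_of_lt_of_lt ?_ hdp
          rw [Prod.dist_eq]
          simpa [dist_self, max_eq_left dist_nonneg] using hd
  -- first inequality
  have h1 : (P.prod R) G ≤ ∫⁻ x, g x ∂P + ENNReal.ofReal δ := by
    rw [Measure.prod_apply hG]
    calc ∫⁻ x, R (Prod.mk x ⁻¹' G) ∂P
        ≤ ∫⁻ x, (g x + ENNReal.ofReal δ) ∂P := by
          refine lintegral_mono fun x => ?_
          refine (hRS _ (measurable_prodMk_left hG)).trans ?_
          refine add_le_add_left (measure_mono ?_) _
          intro y hy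
          rw [mem_thickening_iff] at hy
          obtain ⟨b, hb, hdb⟩ := hy
          refine mem_preimage.2 (mem_thickening_iff.2 ⟨(x, b), hb, ?_⟩)
          rw [Prod.dist_eq]
          simpa [dist_self, max_eq_right dist_nonneg] using hdb
      _ = ∫⁻ x, g x ∂P + ENNReal.ofReal δ := by
          rw [lintegral_add_right _ measurable_const, lintegral_const, measure_univ, mul_one]
  -- second (layer-cake) inequality
  have h2 : ∫⁻ x, g x ∂P ≤ ∫⁻ x, g' x ∂Q + ENNReal.ofReal ε := by
    have hcake : ∫⁻ x, g x ∂P = ∫⁻ t in Set.Ioi (0 : ℝ), P {x | t < (g x).toReal} := by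
      have heq : (fun x => g x) = fun x => ENNReal.ofReal ((g x).toReal) := by
        funext x; rw [ENNReal.ofReal_toReal (hgtop x)]
      rw [heq]
      exact lintegral_eq_lintegral_meas_lt P (ae_of_all _ fun x => ENNReal.toReal_nonneg)
        hgmble.ennreal_toReal.aemeasurable
    have hcake' : ∫⁻ x, g' x ∂Q = ∫⁻ t in Set.Ioi (0 : ℝ), Q {x | t < (g' x).toReal} := by
      have heq : (fun x => g' x) = fun x => ENNReal.ofReal ((g' x).toReal) := by
        funext x; rw [ENNReal.ofReal_toReal (hg'top x)]
      rw [heq]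
      exact lintegral_eq_lintegral_meas_lt Q (ae_of_all _ fun x => ENNReal.toReal_nonneg)
        hg'mble.ennreal_toReal.aemeasurable
    have hsplit : ∫⁻ t in Set.Ioi (0 : ℝ), P {x | t < (g x).toReal}
        = ∫⁻ t in Set.Ioc (0 : ℝ) 1, P {x | t < (g x).toReal} := by
      rw [← Set.Ioc_union_Ioi_eq_Ioi (zero_le_one (α := ℝ)),
        lintegral_union measurableSet_Ioi Set.Ioc_disjoint_Ioi_same]
      have hzero : ∫⁻ t in Set.Ioi (1 : ℝ), P {x | t < (g x).toReal} = 0 := by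
        rw [setLIntegral_congr_fun measurableSet_Ioi
          (fun t (ht : 1 < t) => ?_), lintegral_zero]
        have hempty : {x | t < (g x).toReal} = (∅ : Set X) := by
          apply Set.eq_empty_iff_forall_notMem.2
          intro x hx
          have h1 : (g x).toReal ≤ 1 := by
            simpa using ENNReal.toReal_mono ENNReal.one_ne_top (hgle x)
          exact absurd (lt_of_lt_of_le (lt_trans ht hx) h1) (lt_irrefl _)
        rw [hempty, measure_empty]
      rw [hzero, add_zero]
    rw [hcake, hcake', hsplit]
    have hmono : ∫⁻ t in Set.Ioc (0 : ℝ) 1, P {x | t < (g x).toReal}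
        ≤ ∫⁻ t in Set.Ioc (0 : ℝ) 1, (Q {x | t < (g' x).toReal} + ENNReal.ofReal ε) := by
      refine lintegral_mono fun t => ?_
      have hA : MeasurableSet {x | t < (g x).toReal} :=
        measurableSet_lt measurable_const hgmble.ennreal_toReal
      refine (hPQ _ hA).trans (add_le_add_left (measure_mono ?_) _)
      intro x' hx'
      rw [mem_thickening_iff] at hx'
      obtain ⟨x, (hx : t < (g x).toReal), hdx⟩ := hx'
      have hle : g x ≤ g' x' := key x x' hdx
      exact lt_of_lt_of_le hx (ENNReal.toReal_mono (hg'top x') hle)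
    refine hmono.trans ?_
    rw [lintegral_add_right _ measurable_const, lintegral_const, Measure.restrict_apply_univ,
      Real.volume_Ioc]
    simp only [sub_zero, ENNReal.ofReal_one, mul_one]
    refine add_le_add_left (lintegral_mono_set Set.Ioc_subset_Ioi_self) _
  calc (P.prod R) G ≤ ∫⁻ x, g x ∂P + ENNReal.ofReal δ := h1
    _ ≤ (∫⁻ x, g' x ∂Q + ENNReal.ofReal ε) + ENNReal.ofReal δ := add_le_add_left h2 _
    _ = (Q.prod S) (thickening (ε + δ) G) + ENNReal.ofReal (ε + δ) := by
        rw [Measure.prod_apply hmG', ENNReal.ofReal_add hε.le hδ.le, add_assoc]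

/-- Tensorization of the Lévy–Prokhorov-type inequality to finite products. -/
lemma lp_pi {X : Type*} [MetricSpace X] [SecondCountableTopology X] [MeasurableSpace X]
    [BorelSpace X] (P Q : Measure X) [IsProbabilityMeasure P] [IsProbabilityMeasure Q]
    {ε : ℝ} (hε : 0 < ε)
    (h : ∀ B : Set X, MeasurableSet B → P B ≤ Q (thickening ε B) + ENNReal.ofReal ε) :
    ∀ (n : ℕ) (F : Set (Fin n → X)), MeasurableSet F →
      Measure.pi (fun _ : Fin n => P) F ≤
        Measure.pi (fun _ : Fin n => Q) (thickening (((n : ℝ) + 1) * ε) F)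
          + ENNReal.ofReal (((n : ℝ) + 1) * ε) := by
  intro n
  induction n with
  | zero =>
    intro F hF
    rcases F.eq_empty_or_nonempty with rfl | ⟨f0, hf0⟩
    · simp
    · have hsub : (univ : Set (Fin 0 → X)) ⊆ thickening ((((0 : ℕ) : ℝ) + 1) * ε) F := by
        intro f _
        refine mem_thickening_iff.2 ⟨f0, hf0, ?_⟩
        have hfe : f = f0 := Subsingleton.elim f f0
        rw [hfe, dist_self]
        positivity
      calc Measure.pi (fun _ : Fin 0 => P) F
          ≤ Measure.pi (fun _ : Fin 0 => P) univ := measure_mono (subset_univ F)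
        _ = 1 := measure_univ
        _ = Measure.pi (fun _ : Fin 0 => Q) univ := measure_univ.symm
        _ ≤ Measure.pi (fun _ : Fin 0 => Q) (thickening ((((0 : ℕ) : ℝ) + 1) * ε) F) :=
            measure_mono hsub
        _ ≤ _ := le_self_add
  | succ n ih =>
    intro F hF
    set e := MeasurableEquiv.piFinSuccAbove (fun _ : Fin (n + 1) => X) 0 with he
    have hpresP : MeasurePreserving ⇑e (Measure.pi fun _ : Fin (n + 1) => P)
        (P.prod (Measure.pi fun _ : Fin n => P)) :=
      measurePreserving_piFinSuccAbove (fun _ => P) 0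
    have hpresQ : MeasurePreserving ⇑e (Measure.pi fun _ : Fin (n + 1) => Q)
        (Q.prod (Measure.pi fun _ : Fin n => Q)) :=
      measurePreserving_piFinSuccAbove (fun _ => Q) 0
    have hsa : ∀ (p : X × (Fin n → X)),
        ⇑e.symm p = Fin.insertNth (α := fun _ : Fin (n + 1) => X) 0 p.1 p.2 := fun p => rfl
    have hiso : Isometry (⇑e.symm) := by
      apply Isometry.of_dist_eq
      rintro ⟨x, f⟩ ⟨y, g⟩
      rw [hsa, hsa, Fin.dist_insertNth_insertNth, Prod.dist_eq]
    have hpre : ∀ (c : ℝ) (A : Set (Fin (n + 1) → X)),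
        thickening c (⇑e.symm ⁻¹' A) = ⇑e.symm ⁻¹' (thickening c A) := by
      intro c A
      ext p
      simp only [mem_preimage, mem_thickening_iff]
      constructor
      · rintro ⟨z, hz, hd⟩
        exact ⟨e.symm z, hz, by rw [hiso.dist_eq]; exact hd⟩
      · rintro ⟨w, hw, hd⟩
        refine ⟨e w, by simpa using hw, ?_⟩
        rw [← hiso.dist_eq]
        simpa using hd
    have hmeasP : ∀ A : Set (Fin (n + 1) → X),
        (Measure.pi fun _ : Fin (n + 1) => P) A
          = (P.prod (Measure.pi fun _ : Fin n => P)) (⇑e.symm ⁻¹' A) := by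
      intro A
      have hpp := hpresP.measure_preimage_equiv (⇑e.symm ⁻¹' A)
      rwa [show ⇑e ⁻¹' (⇑e.symm ⁻¹' A) = A by ext x; simp] at hpp
    have hmeasQ : ∀ A : Set (Fin (n + 1) → X),
        (Measure.pi fun _ : Fin (n + 1) => Q) A
          = (Q.prod (Measure.pi fun _ : Fin n => Q)) (⇑e.symm ⁻¹' A) := by
      intro A
      have hpp := hpresQ.measure_preimage_equiv (⇑e.symm ⁻¹' A)
      rwa [show ⇑e ⁻¹' (⇑e.symm ⁻¹' A) = A by ext x; simp] at hpp
    have hδ : (0 : ℝ) < ((n : ℝ) + 1) * ε := by positivity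
    have hstep := lp_step P Q (Measure.pi fun _ : Fin n => P) (Measure.pi fun _ : Fin n => Q)
      hε hδ h (fun C hC => ih C hC) (G := ⇑e.symm ⁻¹' F) (e.symm.measurable hF)
    have hcst2 : ε + ((n : ℝ) + 1) * ε = ((((n : ℕ) + 1 : ℕ) : ℝ) + 1) * ε := by
      push_cast; ring
    calc (Measure.pi fun _ : Fin (n + 1) => P) F
        = (P.prod (Measure.pi fun _ : Fin n => P)) (⇑e.symm ⁻¹' F) := hmeasP F
      _ ≤ (Q.prod (Measure.pi fun _ : Fin n => Q))
            (thickening (ε + ((n : ℝ) + 1) * ε) (⇑e.symm ⁻¹' F))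
            + ENNReal.ofReal (ε + ((n : ℝ) + 1) * ε) := hstep
      _ = (Measure.pi fun _ : Fin (n + 1) => Q)
            (thickening (((((n : ℕ) + 1 : ℕ) : ℝ) + 1) * ε) F)
            + ENNReal.ofReal (((((n : ℕ) + 1 : ℕ) : ℝ) + 1) * ε) := by
          rw [← hcst2, hpre, ← hmeasQ]

end Aux

/-- If `H₀, H₁` lie in a weakly compact set and admit a uniformly consistent FP-test
whose decision regions have disjoint closures, then the weak closures of `H₀` and `H₁`
are disjoint. -/
theorem stmt_9 {X : Type*} [MetricSpace X] [TopologicalSpace.SeparableSpace X]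
    [MeasurableSpace X] [BorelSpace X]
    (H0 H1 : Set (ProbabilityMeasure X))
    (K : Set (ProbabilityMeasure X)) (hK : IsCompact K) (h0K : H0 ⊆ K) (h1K : H1 ⊆ K)
    (φ : ∀ n : ℕ, (Fin n → X) → ℕ)
    (hmeas : ∀ n, Measurable (φ n)) (hval : ∀ n x, φ n x ≤ 2)
    (hopen0 : ∀ n, IsOpen {x : Fin n → X | φ n x = 0})
    (hopen1 : ∀ n, IsOpen {x : Fin n → X | φ n x = 1})
    (hdisjcl : ∀ n, Disjoint (closure {x : Fin n → X | φ n x = 0})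
      (closure {x : Fin n → X | φ n x = 1}))
    (hunif0 : ∀ ε > (0 : ℝ), ∃ N : ℕ, ∀ n ≥ N, ∀ P ∈ H0,
      (Measure.pi fun _ : Fin n => (P : Measure X)) {x | φ n x ≠ 0} ≤ ENNReal.ofReal ε)
    (hunif1 : ∀ ε > (0 : ℝ), ∃ N : ℕ, ∀ n ≥ N, ∀ P ∈ H1,
      (Measure.pi fun _ : Fin n => (P : Measure X)) {x | φ n x ≠ 1} ≤ ENNReal.ofReal ε) :
    Disjoint (closure H0) (closure H1) := by
  haveI : SecondCountableTopology X := UniformSpace.secondCountable_of_separable X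
  by_contra hcon
  obtain ⟨Q, hQ0, hQ1⟩ := Set.not_disjoint_iff.mp hcon
  -- choose n such that errors are at most 1/4
  obtain ⟨N0, hN0⟩ := hunif0 (1/4) (by norm_num)
  obtain ⟨N1, hN1⟩ := hunif1 (1/4) (by norm_num)
  set n := max N0 N1 with hn_def
  -- decision regions
  set B0 : Set (Fin n → X) := {x | φ n x = 0} with hB0_def
  set B1 : Set (Fin n → X) := {x | φ n x = 1} with hB1_def
  have hB0 : MeasurableSet B0 := (hopen0 n).measurableSet
  have hB1 : MeasurableSet B1 := (hopen1 n).measurableSet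
  -- lower bounds on decision regions for hypothesis measures
  have hlow : ∀ (P : ProbabilityMeasure X) (B : Set (Fin n → X)), MeasurableSet B →
      (Measure.pi fun _ : Fin n => (P : Measure X)) Bᶜ ≤ ENNReal.ofReal (1/4) →
      ENNReal.ofReal (3/4) ≤ (Measure.pi fun _ : Fin n => (P : Measure X)) B := by
    intro P B hB herr
    have hcompl : (Measure.pi fun _ : Fin n => (P : Measure X)) B
        + (Measure.pi fun _ : Fin n => (P : Measure X)) Bᶜ = 1 :=
      (measure_add_measure_compl hB).trans measure_univ
    have hBeq : (Measure.pi fun _ : Fin n => (P : Measure X)) B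
        = 1 - (Measure.pi fun _ : Fin n => (P : Measure X)) Bᶜ :=
      ENNReal.eq_sub_of_add_eq (measure_ne_top _ _) hcompl
    rw [hBeq]
    have h34 : ENNReal.ofReal (3/4) = 1 - ENNReal.ofReal (1/4) := by
      rw [← ENNReal.ofReal_one, ← ENNReal.ofReal_sub _ (by norm_num : (0:ℝ) ≤ 1/4)]
      norm_num
    rw [h34]
    exact tsub_le_tsub_left herr 1
  have hlow0 : ∀ P ∈ H0,
      ENNReal.ofReal (3/4) ≤ (Measure.pi fun _ : Fin n => (P : Measure X)) B0 := by
    intro P hP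
    refine hlow P B0 hB0 ?_
    have hc : B0ᶜ = {x | φ n x ≠ 0} := by ext x; simp [hB0_def]
    rw [hc]
    exact hN0 n (le_max_left _ _) P hP
  have hlow1 : ∀ P ∈ H1,
      ENNReal.ofReal (3/4) ≤ (Measure.pi fun _ : Fin n => (P : Measure X)) B1 := by
    intro P hP
    refine hlow P B1 hB1 ?_
    have hc : B1ᶜ = {x | φ n x ≠ 1} := by ext x; simp [hB1_def]
    rw [hc]
    exact hN1 n (le_max_right _ _) P hP
  -- Lévy-Prokhorov approximation of Q by elements of H
  have hclose : ∀ (H : Set (ProbabilityMeasure X)), Q ∈ closure H → ∀ ε > (0:ℝ),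
      ∃ P ∈ H, ∀ B : Set X, MeasurableSet B →
        (P : Measure X) B ≤ (Q : Measure X) (thickening ε B) + ENNReal.ofReal ε := by
    intro H hQH ε hε
    set h := LevyProkhorov.probabilityMeasureHomeomorph (Ω := X) with hh
    have hmem : h Q ∈ closure (h '' H) := by
      rw [← h.image_closure]; exact Set.mem_image_of_mem h hQH
    rw [Metric.mem_closure_iff] at hmem
    obtain ⟨p, hp, hdist⟩ := hmem ε hε
    obtain ⟨P, hPH, rfl⟩ := hp
    refine ⟨P, hPH, fun B hB => ?_⟩
    have hed : levyProkhorovEDist (Q : Measure X) (P : Measure X) < ENNReal.ofReal ε := by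
      have hne := levyProkhorovEDist_ne_top (Q : Measure X) (P : Measure X)
      rw [ENNReal.lt_ofReal_iff_toReal_lt hne]
      exact hdist
    have hle := right_measure_le_of_levyProkhorovEDist_lt hed hB
    rwa [ENNReal.toReal_ofReal hε.le] at hle
  -- main estimate: Q's product measure gives mass ≥ 3/4 to the closures
  have hmain : ∀ (B : Set (Fin n → X)), MeasurableSet B →
      ∀ (H : Set (ProbabilityMeasure X)), Q ∈ closure H →
      (∀ P ∈ H, ENNReal.ofReal (3/4) ≤ (Measure.pi fun _ : Fin n => (P : Measure X)) B) →
      ENNReal.ofReal (3/4) ≤ (Measure.pi fun _ : Fin n => (Q : Measure X)) (closure B) := by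
    intro B hB H hQH hlowH
    have hbound : ∀ c : ℝ, 0 < c → ENNReal.ofReal (3/4) ≤
        (Measure.pi fun _ : Fin n => (Q : Measure X)) (thickening c B) + ENNReal.ofReal c := by
      intro c hc
      set ε := c / ((n : ℝ) + 1) with hε_def
      have hε : 0 < ε := by positivity
      obtain ⟨P, hPH, hPQ⟩ := hclose H hQH ε hε
      have hpi := lp_pi (P : Measure X) (Q : Measure X) hε hPQ n B hB
      have hcc : ((n : ℝ) + 1) * ε = c := by
        rw [hε_def]; field_simp
      rw [hcc] at hpi
      exact (hlowH P hPH).trans hpi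
    have htend : Tendsto (fun c : ℝ =>
        (Measure.pi fun _ : Fin n => (Q : Measure X)) (thickening c B) + ENNReal.ofReal c)
        (nhdsWithin 0 (Set.Ioi 0))
        (nhds ((Measure.pi fun _ : Fin n => (Q : Measure X)) (closure B) + 0)) := by
      apply Tendsto.add
      · exact tendsto_measure_thickening ⟨1, one_pos, measure_ne_top _ _⟩
      · have h0 : Tendsto (fun c : ℝ => ENNReal.ofReal c) (nhds 0) (nhds 0) := by
          simpa using (ENNReal.continuous_ofReal.tendsto 0)
        exact h0.mono_left nhdsWithin_le_nhds
    have hge := ge_of_tendsto htend (eventually_nhdsWithin_of_forall hbound)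
    simpa using hge
  have h0 := hmain B0 hB0 H0 hQ0 hlow0
  have h1 := hmain B1 hB1 H1 hQ1 hlow1
  have hunion : (Measure.pi fun _ : Fin n => (Q : Measure X)) (closure B0 ∪ closure B1)
      = (Measure.pi fun _ : Fin n => (Q : Measure X)) (closure B0)
        + (Measure.pi fun _ : Fin n => (Q : Measure X)) (closure B1) :=
    measure_union (hdisjcl n) isClosed_closure.measurableSet
  have hfin : ENNReal.ofReal (3/4) + ENNReal.ofReal (3/4) ≤ 1 := by
    calc ENNReal.ofReal (3/4) + ENNReal.ofReal (3/4)
        ≤ (Measure.pi fun _ : Fin n => (Q : Measure X)) (closure B0)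
          + (Measure.pi fun _ : Fin n => (Q : Measure X)) (closure B1) := add_le_add h0 h1
      _ = (Measure.pi fun _ : Fin n => (Q : Measure X)) (closure B0 ∪ closure B1) :=
          hunion.symm
      _ ≤ 1 := prob_le_one
  rw [← ENNReal.ofReal_add (by norm_num) (by norm_num)] at hfin
  have hcontra := ENNReal.ofReal_le_one.mp hfin
  norm_num at hcontra
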